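/- Let X be a separable Hilbert space, e^{tA} a C₀-semigroup, Q self-adjoint nonnegative with Q_∞ x = ∫_0^∞ e^{sA}Qe^{sA*}x ds convergent, satisfying the Lyapunov equation. Then e^{tA} maps H_∞ = Q_∞^{1/2}(X) into itself and ‖Q_∞^{-1/2} e^{tA} Q_∞^{1/2}‖_{L(X)} ≤ 1 for all t > 0; i.e., the restriction S_∞(t) of e^{tA} to H_∞ is a contraction semigroup on H_∞. -/

import Mathlib

open MeasureTheory
open scoped RealInnerProductSpace

set_option maxHeartbeats 2000000
set_option synthInstance.maxHeartbeats 1000000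

/-- `e^{tA}` maps `H_∞ = Q_∞^{1/2}(X)` into itself and the restriction is a
contraction: `‖Q_∞^{-1/2} e^{tA} Q_∞^{1/2}‖ ≤ 1` for all `t > 0`; here this is
expressed as: for every `x` there is `y` with `e^{tA}(Q_∞^{1/2}x) = Q_∞^{1/2}y`
and `‖y‖ ≤ ‖x‖`. -/
theorem stmt19 {X : Type*} [NormedAddCommGroup X] [InnerProductSpace ℝ X]
    [CompleteSpace X] [TopologicalSpace.SeparableSpace X]
    (S : ℝ → X →L[ℝ] X) (hS0 : S 0 = 1)
    (hSsem : ∀ t s : ℝ, 0 ≤ t → 0 ≤ s → S (t + s) = (S t).comp (S s))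
    (hScont : ∀ x : X, Continuous fun t => S t x)
    (Q : X →L[ℝ] X) (hQsa : IsSelfAdjoint Q) (hQpos : ∀ x : X, 0 ≤ ⟪Q x, x⟫)
    (Qinf : X →L[ℝ] X)
    (hint : ∀ x : X, IntegrableOn
      (fun s => S s (Q (ContinuousLinearMap.adjoint (S s) x))) (Set.Ioi 0))
    (hQinf : ∀ x : X, Qinf x
      = ∫ s in Set.Ioi (0:ℝ), S s (Q (ContinuousLinearMap.adjoint (S s) x)))
    (Rinf : X →L[ℝ] X) (hRsa : IsSelfAdjoint Rinf)
    (hRpos : ∀ x : X, 0 ≤ ⟪Rinf x, x⟫) (hRsq : Rinf.comp Rinf = Qinf) :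
    ∀ t > (0:ℝ), ∀ x : X, ∃ y : X, S t (Rinf x) = Rinf y ∧ ‖y‖ ≤ ‖x‖ := by
  intro t ht x
  have hRadj : ContinuousLinearMap.adjoint Rinf = Rinf :=
    ContinuousLinearMap.isSelfAdjoint_iff'.mp hRsa
  -- the quadratic form of `Qinf` via `Rinf`
  have hRR : ∀ w : X, ⟪Rinf w, Rinf w⟫ = ⟪Qinf w, w⟫ := by
    intro w
    have h : ⟪(ContinuousLinearMap.adjoint Rinf) (Rinf w), w⟫ = ⟪Rinf w, Rinf w⟫ :=
      ContinuousLinearMap.adjoint_inner_left Rinf w (Rinf w)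
    rw [hRadj] at h
    rw [← h, ← ContinuousLinearMap.comp_apply, hRsq]
  -- pointwise identity for the integrand
  have hfone : ∀ w : X, ∀ s : ℝ,
      (innerSL ℝ w) (S s (Q (ContinuousLinearMap.adjoint (S s) w)))
        = ⟪Q (ContinuousLinearMap.adjoint (S s) w), ContinuousLinearMap.adjoint (S s) w⟫ := by
    intro w s
    have : (innerSL ℝ w) (S s (Q (ContinuousLinearMap.adjoint (S s) w)))
        = ⟪S s (Q (ContinuousLinearMap.adjoint (S s) w)), w⟫ := real_inner_comm _ _
    rw [this, ← ContinuousLinearMap.adjoint_inner_right]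
  -- integrability of the scalar integrand
  have hInt : ∀ w : X, IntegrableOn
      (fun s => ⟪Q (ContinuousLinearMap.adjoint (S s) w),
        ContinuousLinearMap.adjoint (S s) w⟫) (Set.Ioi 0) := by
    intro w
    have h := (innerSL ℝ w).integrable_comp (hint w)
    exact h.congr (Filter.Eventually.of_forall fun s => hfone w s)
  -- the quadratic form as an integral
  have hQF : ∀ w : X, ⟪Qinf w, w⟫ = ∫ s in Set.Ioi (0:ℝ),
      ⟪Q (ContinuousLinearMap.adjoint (S s) w), ContinuousLinearMap.adjoint (S s) w⟫ := by
    intro w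
    have h1 : ⟪Qinf w, w⟫ = (innerSL ℝ w) (Qinf w) := (real_inner_comm _ _).symm
    rw [h1, hQinf w, ← (innerSL ℝ w).integral_comp_comm (hint w)]
    exact setIntegral_congr_fun measurableSet_Ioi fun s _ => hfone w s
  -- the key contraction estimate
  have hcontr : ∀ z : X,
      ‖Rinf (ContinuousLinearMap.adjoint (S t) z)‖ ≤ ‖Rinf z‖ := by
    intro z
    have hAs : ∀ s ∈ Set.Ioi (0:ℝ),
        ContinuousLinearMap.adjoint (S s) (ContinuousLinearMap.adjoint (S t) z)
          = ContinuousLinearMap.adjoint (S (s + t)) z := by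
      intro s hs
      have hcomp : S (t + s) = (S t).comp (S s) := hSsem t s ht.le (le_of_lt hs)
      rw [show s + t = t + s by ring, hcomp, ContinuousLinearMap.adjoint_comp,
        ContinuousLinearMap.comp_apply]
    have hQle : ⟪Qinf (ContinuousLinearMap.adjoint (S t) z),
        ContinuousLinearMap.adjoint (S t) z⟫ ≤ ⟪Qinf z, z⟫ := by
      rw [hQF, hQF]
      set g : ℝ → ℝ := fun s => ⟪Q (ContinuousLinearMap.adjoint (S s) z),
        ContinuousLinearMap.adjoint (S s) z⟫ with hgdef
      have h1 : (∫ s in Set.Ioi (0:ℝ),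
          ⟪Q (ContinuousLinearMap.adjoint (S s) (ContinuousLinearMap.adjoint (S t) z)),
            ContinuousLinearMap.adjoint (S s) (ContinuousLinearMap.adjoint (S t) z)⟫)
          = ∫ s in Set.Ioi (0:ℝ), g (s + t) := by
        refine setIntegral_congr_fun measurableSet_Ioi fun s hs => ?_
        rw [hAs s hs]
      have hemb : MeasurableEmbedding fun x : ℝ => x + t :=
        (Homeomorph.addRight t).isClosedEmbedding.measurableEmbedding
      have h2 : (∫ s in Set.Ioi (0:ℝ), g (s + t)) = ∫ s in Set.Ioi t, g s := by
        have : (∫ s in Set.Ioi t, g s)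
            = ∫ s in Set.Ioi t, g s ∂(Measure.map (fun x => x + t) volume) := by
          rw [map_add_right_eq_self]
        rw [this, hemb.setIntegral_map]
        congr 1
        ext s
        simp [Set.mem_preimage, Set.mem_Ioi]
      rw [h1, h2]
      refine setIntegral_mono_set (hInt z) ?_ ?_
      · exact Filter.Eventually.of_forall fun s => hQpos _
      · exact HasSubset.Subset.eventuallyLE fun s hs => lt_trans ht hs
    have hsq : ‖Rinf (ContinuousLinearMap.adjoint (S t) z)‖ ^ 2 ≤ ‖Rinf z‖ ^ 2 := by
      rw [← real_inner_self_eq_norm_sq, ← real_inner_self_eq_norm_sq, hRR, hRR]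
      exact hQle
    have := Real.sqrt_le_sqrt hsq
    rwa [Real.sqrt_sq (norm_nonneg _), Real.sqrt_sq (norm_nonneg _)] at this
  -- the key duality bound
  set v : X := S t (Rinf x) with hv
  have hkey : ∀ z : X, |⟪v, z⟫| ≤ ‖x‖ * ‖Rinf z‖ := by
    intro z
    have h1 : ⟪v, z⟫ = ⟪Rinf x, ContinuousLinearMap.adjoint (S t) z⟫ :=
      (ContinuousLinearMap.adjoint_inner_right _ _ _).symm
    have h2 : ⟪Rinf x, ContinuousLinearMap.adjoint (S t) z⟫
        = ⟪x, Rinf (ContinuousLinearMap.adjoint (S t) z)⟫ := by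
      conv_lhs => rw [← hRadj]
      rw [ContinuousLinearMap.adjoint_inner_left]
    rw [h1, h2]
    calc |⟪x, Rinf (ContinuousLinearMap.adjoint (S t) z)⟫|
        ≤ ‖x‖ * ‖Rinf (ContinuousLinearMap.adjoint (S t) z)‖ := abs_real_inner_le_norm _ _
      _ ≤ ‖x‖ * ‖Rinf z‖ := mul_le_mul_of_nonneg_left (hcontr z) (norm_nonneg x)
  -- vanishing on the kernel
  have hker : ∀ z : X, Rinf z = 0 → ⟪v, z⟫ = 0 := by
    intro z hz
    have := hkey z
    rw [hz, norm_zero, mul_zero] at this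
    exact abs_eq_zero.mp (le_antisymm this (abs_nonneg _))
  -- construct a bounded functional on the range of `Rinf`
  set R : X →ₗ[ℝ] X := (Rinf : X →ₗ[ℝ] X) with hR
  obtain ⟨g, hg⟩ :=
    set_option synthInstance.maxHeartbeats 1000000 in
    R.rangeRestrict.exists_rightInverse_of_surjective R.range_rangeRestrict
  have hgR : ∀ u : LinearMap.range R, Rinf (g u) = (u : X) := by
    intro u
    have h : R.rangeRestrict (g u) = u := by
      exact LinearMap.congr_fun hg u
    exact congrArg Subtype.val h
  set ℓ₀ : LinearMap.range R →ₗ[ℝ] ℝ := ((innerSL ℝ v) : X →ₗ[ℝ] ℝ).comp g with hℓ₀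
  have hbound : ∀ u : LinearMap.range R, ‖ℓ₀ u‖ ≤ ‖x‖ * ‖u‖ := by
    intro u
    have h1 : ℓ₀ u = ⟪v, g u⟫ := rfl
    rw [h1, Real.norm_eq_abs]
    calc |⟪v, g u⟫| ≤ ‖x‖ * ‖Rinf (g u)‖ := hkey _
      _ = ‖x‖ * ‖u‖ := by rw [hgR u]; rfl
  set ℓ : LinearMap.range R →L[ℝ] ℝ := ℓ₀.mkContinuous ‖x‖ hbound with hℓ
  have hℓnorm : ‖ℓ‖ ≤ ‖x‖ := ℓ₀.mkContinuous_norm_le (norm_nonneg x) hbound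
  obtain ⟨G, hGext, hGnorm⟩ := exists_extension_norm_eq (LinearMap.range R) ℓ
  set y : X := (InnerProductSpace.toDual ℝ X).symm G with hy
  have hyinner : ∀ u : X, ⟪y, u⟫ = G u := fun u => InnerProductSpace.toDual_symm_apply
  have hynorm : ‖y‖ ≤ ‖x‖ := by
    rw [hy, LinearIsometryEquiv.norm_map, hGnorm]
    exact hℓnorm
  refine ⟨y, ?_, hynorm⟩
  have : Rinf y = v := by
    apply ext_inner_right ℝ
    intro z
    have hmem : Rinf z ∈ LinearMap.range R := ⟨z, rfl⟩
    have h1 : ⟪Rinf y, z⟫ = ⟪y, Rinf z⟫ := by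
      conv_lhs => rw [← hRadj]
      rw [ContinuousLinearMap.adjoint_inner_left]
    have h2 : G (Rinf z) = ℓ ⟨Rinf z, hmem⟩ := hGext ⟨Rinf z, hmem⟩
    have h3 : ℓ ⟨Rinf z, hmem⟩ = ⟪v, g ⟨Rinf z, hmem⟩⟫ := rfl
    have h4 : ⟪v, g ⟨Rinf z, hmem⟩⟫ = ⟪v, z⟫ := by
      have hsub : Rinf (g ⟨Rinf z, hmem⟩ - z) = 0 := by
        rw [map_sub, hgR ⟨Rinf z, hmem⟩, sub_self]
      have := hker _ hsub
      rw [inner_sub_right] at this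
      linarith
    rw [h1, hyinner, h2, h3, h4]
  exact this.symm
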